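/- arXiv:2302.13093 — 4 statements merged into one kernel-verified Lean document; each statement's English description precedes it below -/
import Mathlib

section
/- For any ε with 0 < ε < 1/3 and any x > 0, erfc(x) ≥ exp(-(1+ε)*x^2 + log ε), i.e., erfc(x) ≥ ε * exp(-(1+ε)*x^2). -/
noncomputable def erfc (x : ℝ) : ℝ :=
  (2 / Real.sqrt Real.pi) * ∫ t in Set.Ioi x, Real.exp (-t ^ 2)

theorem erfc_ge (ε : ℝ) (hε0 : 0 < ε) (hε1 : ε < 1 / 3) (x : ℝ) (hx : 0 < x) :
    erfc x ≥ ε * Real.exp (-(1 + ε) * x ^ 2) := by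
  set b : ℝ := 1 + ε with hbdef
  have hb : (0:ℝ) < b := by positivity
  have hsqpi : (0:ℝ) < Real.sqrt Real.pi := Real.sqrt_pos.mpr Real.pi_pos
  -- integrabilities
  have I1 : MeasureTheory.IntegrableOn (fun t : ℝ => Real.exp (-t ^ 2)) (Set.Ioi x) := by
    have := (integrable_exp_neg_mul_sq (b := 1) one_pos).integrableOn (s := Set.Ioi x)
    simpa using this
  have I2 : MeasureTheory.IntegrableOn (fun t : ℝ => t * Real.exp (-b * t ^ 2))
      (Set.Ioi x) := (integrable_mul_exp_neg_mul_sq hb).integrableOn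
  -- value of the auxiliary integral
  have hint : ∫ t in Set.Ioi x, t * Real.exp (-b * t ^ 2)
      = Real.exp (-b * x ^ 2) / (2 * b) := by
    have hderiv : ∀ t ∈ Set.Ici x, HasDerivAt
        (fun t : ℝ => -Real.exp (-b * t ^ 2) / (2 * b))
        (t * Real.exp (-b * t ^ 2)) t := by
      intro t _
      have h1 : HasDerivAt (fun t : ℝ => -b * t ^ 2) (-b * (2 * t)) t := by
        simpa using ((hasDerivAt_pow 2 t).const_mul (-b))
      have h2 := (h1.exp).neg.div_const (2 * b)
      refine h2.congr_deriv ?_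
      rw [div_eq_iff (by positivity)]
      ring
    have htend : Filter.Tendsto (fun t : ℝ => -Real.exp (-b * t ^ 2) / (2 * b))
        Filter.atTop (nhds 0) := by
      have : Filter.Tendsto (fun t : ℝ => -b * t ^ 2) Filter.atTop Filter.atBot := by
        apply Filter.Tendsto.const_mul_atTop_of_neg (by linarith : -b < 0)
        exact Filter.tendsto_pow_atTop two_ne_zero
      have := (Real.tendsto_exp_atBot.comp this).neg.div_const (2 * b)
      simpa using this
    rw [MeasureTheory.integral_Ioi_of_hasDerivAt_of_tendsto'
      (f := fun t : ℝ => -Real.exp (-b * t ^ 2) / (2 * b)) hderiv I2 htend]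
    ring
  -- pointwise bound
  have key : (0.9 : ℝ) * Real.pi ≤ 3 := by nlinarith [Real.pi_lt_d2]
  have hcoef : Real.sqrt Real.pi * Real.sqrt ε * b ≤ 2 := by
    have h1 : Real.sqrt Real.pi ^ 2 = Real.pi := Real.sq_sqrt Real.pi_pos.le
    have h2 : Real.sqrt ε ^ 2 = ε := Real.sq_sqrt hε0.le
    have hsq : (Real.sqrt Real.pi * Real.sqrt ε * b) ^ 2 ≤ 2 ^ 2 := by
      have : (Real.sqrt Real.pi * Real.sqrt ε * b) ^ 2 = Real.pi * ε * b ^ 2 := by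
        rw [mul_pow, mul_pow, h1, h2]
      rw [this]
      have hb4 : b ≤ 4 / 3 := by rw [hbdef]; linarith
      have hbb : b ^ 2 ≤ 16 / 9 := by nlinarith
      have h3 : ε * b ^ 2 ≤ (1 / 3) * (16 / 9) := by nlinarith [sq_nonneg b]
      nlinarith [h3, Real.pi_lt_d2, Real.pi_pos, mul_nonneg hε0.le (sq_nonneg b)]
    have h0 : (0:ℝ) ≤ Real.sqrt Real.pi * Real.sqrt ε * b := by positivity
    nlinarith [hsq, h0]
  have hpt : ∀ t ∈ Set.Ioi x,
      Real.sqrt Real.pi * ε * b * (t * Real.exp (-b * t ^ 2)) ≤ Real.exp (-t ^ 2) := by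
    intro t ht
    have htpos : 0 < t := lt_trans hx ht
    have hexp : Real.exp (-b * t ^ 2) = Real.exp (-t ^ 2) * Real.exp (-(ε * t ^ 2)) := by
      rw [← Real.exp_add, hbdef]; congr 1; ring
    have hεt : 2 * Real.sqrt ε * t ≤ Real.exp (ε * t ^ 2) := by
      have h2 : Real.sqrt ε ^ 2 = ε := Real.sq_sqrt hε0.le
      have := Real.add_one_le_exp (ε * t ^ 2)
      nlinarith [sq_nonneg (Real.sqrt ε * t - 1)]
    -- need: √π ε b t ≤ exp(ε t²)
    have hmain : Real.sqrt Real.pi * ε * b * t ≤ Real.exp (ε * t ^ 2) := by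
      have h2 : Real.sqrt ε * Real.sqrt ε = ε := Real.mul_self_sqrt hε0.le
      calc Real.sqrt Real.pi * ε * b * t
          = (Real.sqrt Real.pi * Real.sqrt ε * b) * (Real.sqrt ε * t) := by
            linear_combination (-(Real.sqrt Real.pi * b * t)) * h2
        _ ≤ 2 * (Real.sqrt ε * t) := by
            apply mul_le_mul_of_nonneg_right hcoef
            positivity
        _ ≤ Real.exp (ε * t ^ 2) := by linarith
    rw [hexp]
    have hpos : 0 < Real.exp (-t ^ 2) := Real.exp_pos _
    have := mul_le_mul_of_nonneg_left hmain hpos.le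
    calc Real.sqrt Real.pi * ε * b * (t * (Real.exp (-t ^ 2) * Real.exp (-(ε * t ^ 2))))
        = (Real.exp (-t ^ 2) * (Real.sqrt Real.pi * ε * b * t)) * Real.exp (-(ε * t ^ 2)) := by
          ring
      _ ≤ (Real.exp (-t ^ 2) * Real.exp (ε * t ^ 2)) * Real.exp (-(ε * t ^ 2)) := by
          apply mul_le_mul_of_nonneg_right this (Real.exp_pos _).le
      _ = Real.exp (-t ^ 2) := by
          rw [mul_assoc, ← Real.exp_add]; simp
  -- integral comparison
  have hmono : ∫ t in Set.Ioi x, Real.sqrt Real.pi * ε * b * (t * Real.exp (-b * t ^ 2))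
      ≤ ∫ t in Set.Ioi x, Real.exp (-t ^ 2) := by
    apply MeasureTheory.setIntegral_mono_on (I2.const_mul _) I1 measurableSet_Ioi hpt
  rw [MeasureTheory.integral_const_mul, hint] at hmono
  have : ε * Real.exp (-b * x ^ 2)
      ≤ (2 / Real.sqrt Real.pi) * ∫ t in Set.Ioi x, Real.exp (-t ^ 2) := by
    rw [div_mul_eq_mul_div, le_div_iff₀ hsqpi]
    calc ε * Real.exp (-b * x ^ 2) * Real.sqrt Real.pi
        = 2 * (Real.sqrt Real.pi * ε * b * (Real.exp (-b * x ^ 2) / (2 * b))) := by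
          field_simp
      _ ≤ 2 * ∫ t in Set.Ioi x, Real.exp (-t ^ 2) := by linarith
  simpa [erfc, hbdef] using this
end

section
/- If X follows a chi-squared distribution with d degrees of freedom, then for every t > 0, P[X ≥ d + 2 sqrt(d t) + 2 t] ≤ exp(−t). In particular, with t = log M, P[X ≥ d + 2 sqrt(d log M) + 2 log M] ≤ 1/M. -/
open MeasureTheory ProbabilityTheory Real
open scoped NNReal ENNReal

namespace ChiSqTailAux

/-- Second-order logarithm bound: `-log (1-u) ≤ u/2 + u/(2(1-u))` for `0 ≤ u < 1`. -/
lemma neg_log_le {u : ℝ} (h0 : 0 ≤ u) (h1 : u < 1) :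
    -Real.log (1 - u) ≤ u / 2 * (1 - u)⁻¹ + u / 2 := by
  have habs : |u| < 1 := by rwa [abs_of_nonneg h0]
  have hsum := Real.hasSum_pow_div_log_of_abs_lt_one habs
  have hgeo : HasSum (fun n : ℕ => u / 2 * u ^ n) (u / 2 * (1 - u)⁻¹) :=
    (hasSum_geometric_of_lt_one h0 h1).mul_left _
  have hone : HasSum (fun n : ℕ => if n = 0 then u / 2 else 0) (u / 2) :=
    hasSum_ite_eq 0 (u / 2)
  refine hasSum_le (fun n => ?_) hsum (hgeo.add hone)
  cases n with
  | zero => simp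
  | succ m =>
    simp only [Nat.succ_ne_zero, if_false, add_zero]
    have hpow : (0:ℝ) ≤ u ^ (m + 1 + 1) := pow_nonneg h0 _
    have h2 : (2:ℝ) ≤ (m + 1 + 1 : ℕ) := by exact_mod_cast Nat.le_add_left 2 m
    calc u ^ (m + 1 + 1) / ((m + 1 : ℕ) + 1 : ℝ)
        ≤ u ^ (m + 1 + 1) / 2 := by
          apply div_le_div_of_nonneg_left hpow two_pos
          push_cast
          push_cast at h2
          linarith
      _ = u / 2 * u ^ (m + 1) := by ring

lemma gauss_integrand_eq (l : ℝ) :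
    (fun x : ℝ => ((Real.toNNReal (gaussianPDFReal 0 1 x) : ℝ≥0) : ℝ) • rexp (l * x ^ 2))
      = fun x : ℝ => (Real.sqrt (2 * π))⁻¹ * rexp (-((1 - 2 * l) / 2) * x ^ 2) := by
  funext x
  rw [Real.coe_toNNReal _ (gaussianPDFReal_nonneg 0 1 x)]
  simp only [gaussianPDFReal, NNReal.coe_one, mul_one, sub_zero, smul_eq_mul]
  rw [mul_assoc, ← Real.exp_add]
  congr 1
  ring

lemma gauss_int {l : ℝ} (hl : l < 1 / 2) :
    Integrable (fun x : ℝ => rexp (l * x ^ 2)) (gaussianReal 0 1) := by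
  have hb : 0 < (1 - 2 * l) / 2 := by linarith
  rw [gaussianReal_of_var_ne_zero 0 one_ne_zero, gaussianPDF_def]
  have hcoe : (fun x : ℝ => ENNReal.ofReal (gaussianPDFReal 0 1 x))
      = fun x : ℝ => ((Real.toNNReal (gaussianPDFReal 0 1 x) : ℝ≥0) : ℝ≥0∞) := rfl
  rw [hcoe, integrable_withDensity_iff_integrable_smul
    ((measurable_gaussianPDFReal 0 1).real_toNNReal)]
  have := gauss_integrand_eq l
  simp only [NNReal.smul_def, smul_eq_mul] at this ⊢
  rw [show (fun x : ℝ => ((Real.toNNReal (gaussianPDFReal 0 1 x) : ℝ≥0) : ℝ) * rexp (l * x ^ 2))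
      = fun x : ℝ => (Real.sqrt (2 * π))⁻¹ * rexp (-((1 - 2 * l) / 2) * x ^ 2) from this]
  exact (integrable_exp_neg_mul_sq hb).const_mul _

lemma gauss_eq {l : ℝ} (hl : l < 1 / 2) :
    ∫ x, rexp (l * x ^ 2) ∂(gaussianReal 0 1) = (Real.sqrt (1 - 2 * l))⁻¹ := by
  have hb : 0 < (1 - 2 * l) / 2 := by linarith
  have h12 : (0:ℝ) < 1 - 2 * l := by linarith
  rw [gaussianReal_of_var_ne_zero 0 one_ne_zero, gaussianPDF_def]
  have hcoe : (fun x : ℝ => ENNReal.ofReal (gaussianPDFReal 0 1 x))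
      = fun x : ℝ => ((Real.toNNReal (gaussianPDFReal 0 1 x) : ℝ≥0) : ℝ≥0∞) := rfl
  rw [hcoe, integral_withDensity_eq_integral_smul
    ((measurable_gaussianPDFReal 0 1).real_toNNReal)]
  simp only [NNReal.smul_def]
  rw [show (fun x : ℝ => ((Real.toNNReal (gaussianPDFReal 0 1 x) : ℝ≥0) : ℝ) • rexp (l * x ^ 2))
      = fun x : ℝ => (Real.sqrt (2 * π))⁻¹ * rexp (-((1 - 2 * l) / 2) * x ^ 2)
    from gauss_integrand_eq l]
  rw [MeasureTheory.integral_const_mul, integral_gaussian]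
  have h2pi : (0:ℝ) < 2 * π := by positivity
  rw [show π / ((1 - 2 * l) / 2) = 2 * π / (1 - 2 * l) by field_simp]
  rw [Real.sqrt_div h2pi.le]
  have hne : Real.sqrt (2 * π) ≠ 0 := by positivity
  field_simp

section PiLemmas

noncomputable local instance (priority := 2000) gaussianMS : MeasureSpace ℝ := ⟨gaussianReal 0 1⟩

local instance (priority := 2000) gaussianSF : SigmaFinite (volume : Measure ℝ) := by
  change SigmaFinite (gaussianReal 0 1)
  infer_instance

lemma pi_int (d : ℕ) {l : ℝ} (hl : l < 1 / 2) :
    Integrable (fun z : Fin d → ℝ => rexp (l * ∑ i, (z i) ^ 2))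
      (Measure.pi fun _ : Fin d => gaussianReal 0 1) := by
  have hmeas : (Measure.pi fun _ : Fin d => gaussianReal 0 1)
      = (volume : Measure (Fin d → ℝ)) := (volume_pi).symm
  rw [hmeas]
  have hfun : (fun z : Fin d → ℝ => rexp (l * ∑ i, (z i) ^ 2))
      = fun z : Fin d → ℝ => ∏ i, rexp (l * (z i) ^ 2) := by
    funext z
    rw [Finset.mul_sum, Real.exp_sum]
  rw [hfun]
  exact MeasureTheory.Integrable.fintype_prod (f := fun _ : Fin d => fun x : ℝ => rexp (l * x ^ 2))
    (fun _ => gauss_int hl)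

lemma pi_eq (d : ℕ) {l : ℝ} (hl : l < 1 / 2) :
    ∫ z : Fin d → ℝ, rexp (l * ∑ i, (z i) ^ 2) ∂(Measure.pi fun _ : Fin d => gaussianReal 0 1)
      = ((Real.sqrt (1 - 2 * l))⁻¹) ^ d := by
  have hmeas : (Measure.pi fun _ : Fin d => gaussianReal 0 1)
      = (volume : Measure (Fin d → ℝ)) := (volume_pi).symm
  rw [hmeas]
  have hfun : (fun z : Fin d → ℝ => rexp (l * ∑ i, (z i) ^ 2))
      = fun z : Fin d → ℝ => ∏ i, rexp (l * (z i) ^ 2) := by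
    funext z
    rw [Finset.mul_sum, Real.exp_sum]
  rw [hfun, volume_pi, MeasureTheory.integral_fintype_prod_eq_pow (fun x : ℝ => rexp (l * x ^ 2))]
  rw [show (∫ x : ℝ, rexp (l * x ^ 2)) = (Real.sqrt (1 - 2 * l))⁻¹ from gauss_eq hl]
  simp

end PiLemmas

lemma chiSq_aux (d : ℕ) (t : ℝ) (ht : 0 < t) :
    (Measure.pi fun _ : Fin d => gaussianReal 0 1)
        {z : Fin d → ℝ | ∑ i, (z i) ^ 2 ≥ d + 2 * Real.sqrt (d * t) + 2 * t} ≤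
      ENNReal.ofReal (Real.exp (-t)) := by
  rcases Nat.eq_zero_or_pos d with hd | hd
  · subst hd
    have hempty : {z : Fin 0 → ℝ | ∑ i, (z i) ^ 2 ≥ (0:ℕ) + 2 * Real.sqrt ((0:ℕ) * t) + 2 * t}
        = (∅ : Set (Fin 0 → ℝ)) := by
      ext z
      simp only [Set.mem_setOf_eq, Set.mem_empty_iff_false, iff_false, not_le,
        Finset.univ_eq_empty, Finset.sum_empty, Nat.cast_zero, zero_mul, Real.sqrt_zero,
        mul_zero, zero_add, ge_iff_le]
      linarith
    rw [hempty]
    simp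
  -- main case
  set D : ℝ := (d : ℝ) with hDdef
  have hD : (0:ℝ) < D := by rw [hDdef]; exact_mod_cast hd
  set r : ℝ := Real.sqrt D with hrdef
  set s : ℝ := Real.sqrt t with hsdef
  have hr : 0 < r := Real.sqrt_pos.2 hD
  have hs : 0 < s := Real.sqrt_pos.2 ht
  have hr2 : r ^ 2 = D := Real.sq_sqrt hD.le
  have hs2 : s ^ 2 = t := Real.sq_sqrt ht.le
  have hden : 0 < 2 * s + r := by linarith
  set l : ℝ := s / (2 * s + r) with hldef
  have hl0 : 0 < l := div_pos hs hden
  have hl : l < 1 / 2 := by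
    rw [hldef, div_lt_div_iff₀ hden two_pos]
    linarith
  have h12 : 1 - 2 * l = r / (2 * s + r) := by
    rw [hldef]
    field_simp
    ring
  have hc : (0:ℝ) < 1 - 2 * l := by
    rw [h12]; positivity
  set a : ℝ := D + 2 * Real.sqrt (D * t) + 2 * t with hadef
  have hsqrt : Real.sqrt (D * t) = r * s := Real.sqrt_mul hD.le t
  -- Chernoff bound
  set μ := Measure.pi fun _ : Fin d => gaussianReal 0 1 with hμ
  have hint := pi_int d hl
  have hcher := ProbabilityTheory.measure_ge_le_exp_mul_mgf
    (X := fun z : Fin d → ℝ => ∑ i, (z i) ^ 2) (μ := μ) (t := l) a hl0.le hint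
  have hmgf : mgf (fun z : Fin d → ℝ => ∑ i, (z i) ^ 2) μ l
      = ((Real.sqrt (1 - 2 * l))⁻¹) ^ d := pi_eq d hl
  rw [hmgf] at hcher
  -- the key real inequality
  have hkey : rexp (-l * a) * ((Real.sqrt (1 - 2 * l))⁻¹) ^ d ≤ rexp (-t) := by
    have hsqrtc : Real.sqrt (1 - 2 * l) = rexp (Real.log (1 - 2 * l) / 2) := by
      rw [← Real.log_sqrt hc.le, Real.exp_log (Real.sqrt_pos.2 hc)]
    rw [hsqrtc, ← Real.exp_neg, ← Real.exp_nat_mul, ← Real.exp_add]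
    apply Real.exp_le_exp.2
    -- -l*a + d * (-(log c / 2)) ≤ -t
    have hlog := neg_log_le (by linarith : (0:ℝ) ≤ 2 * l) (by linarith : 2 * l < 1)
    -- -log(1-2l) ≤ (2l)/2 * (1-2l)⁻¹ + (2l)/2 = l * (1-2l)⁻¹ + l
    have hmul := mul_le_mul_of_nonneg_left hlog (by positivity : (0:ℝ) ≤ D / 2)
    have hexact : D / 2 * (2 * l / 2 * (1 - 2 * l)⁻¹ + 2 * l / 2) - l * a = -t := by
      rw [hadef, hsqrt, h12, hldef, ← hr2, ← hs2]
      field_simp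
      ring
    have hcast : ((d : ℕ) : ℝ) = D := rfl
    rw [hcast]
    nlinarith [hmul, hexact]
  -- conclude
  have hset : {z : Fin d → ℝ | ∑ i, (z i) ^ 2 ≥ (d:ℝ) + 2 * Real.sqrt ((d:ℝ) * t) + 2 * t}
      = {z : Fin d → ℝ | a ≤ ∑ i, (z i) ^ 2} := by
    ext z
    simp only [Set.mem_setOf_eq, ge_iff_le, hadef, hDdef]
  rw [hset]
  calc μ {z : Fin d → ℝ | a ≤ ∑ i, (z i) ^ 2}
      = ENNReal.ofReal ((μ {z : Fin d → ℝ | a ≤ ∑ i, (z i) ^ 2}).toReal) :=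
        (ENNReal.ofReal_toReal (measure_ne_top _ _)).symm
    _ ≤ ENNReal.ofReal (rexp (-l * a) * ((Real.sqrt (1 - 2 * l))⁻¹) ^ d) :=
        ENNReal.ofReal_le_ofReal hcher
    _ ≤ ENNReal.ofReal (rexp (-t)) := ENNReal.ofReal_le_ofReal hkey

end ChiSqTailAux

theorem chiSq_tail_bound (d : ℕ) (t : ℝ) (ht : 0 < t) :
    (Measure.pi fun _ : Fin d => gaussianReal 0 1)
        {z : Fin d → ℝ | ∑ i, (z i) ^ 2 ≥ d + 2 * Real.sqrt (d * t) + 2 * t} ≤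
      ENNReal.ofReal (Real.exp (-t)) ∧
    ∀ Mr : ℝ, 1 < Mr →
      (Measure.pi fun _ : Fin d => gaussianReal 0 1)
          {z : Fin d → ℝ |
            ∑ i, (z i) ^ 2 ≥ d + 2 * Real.sqrt (d * Real.log Mr) + 2 * Real.log Mr} ≤
        ENNReal.ofReal (1 / Mr) := by
  refine ⟨ChiSqTailAux.chiSq_aux d t ht, fun Mr hMr => ?_⟩
  have h0 : (0:ℝ) < Mr := lt_trans one_pos hMr
  have hlog : 0 < Real.log Mr := Real.log_pos hMr
  have := ChiSqTailAux.chiSq_aux d (Real.log Mr) hlog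
  rwa [Real.exp_neg, Real.exp_log h0, ← one_div] at this
end

section
/- For Q̂ > 0, χ̂ > 0 and Λ = (Mλ)² > 0, the Gaussian expectation of the minimum value satisfies: E_z[ min_x ( (Q̂/2)x² − sqrt(χ̂) z x + Mλ|x| ) ] = −(1/(2Q̂)) [ (Λ + χ̂) erfc( sqrt(Λ/(2χ̂)) ) − sqrt(2Λχ̂/π) exp(−Λ/(2χ̂)) ], where z is standard Gaussian. -/
open MeasureTheory ProbabilityTheory
open Set Filter Real

private lemma infi_quad (Q a b z : ℝ) (hQ : 0 < Q) (ha : 0 ≤ a) (_hb : 0 ≤ b) :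
    (⨅ x : ℝ, Q / 2 * x ^ 2 - a * z * x + b * |x|)
      = -(max (a * |z| - b) 0) ^ 2 / (2 * Q) := by
  set m := max (a * |z| - b) 0 with hm
  have hm0 : 0 ≤ m := le_max_right _ _
  have hmz : a * |z| ≤ m + b := by
    have := le_max_left (a * |z| - b) 0
    linarith
  have key : (a * |z| - b) * m = m * m := by
    rcases max_choice (a * |z| - b) 0 with h | h
    · rw [hm, h]
    · rw [hm, h]; ring
  have lower : ∀ x : ℝ, -m ^ 2 / (2 * Q) ≤ Q / 2 * x ^ 2 - a * z * x + b * |x| := by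
    intro x
    rw [div_le_iff₀ (by positivity : (0:ℝ) < 2 * Q)]
    have h1 : a * (z * x) ≤ a * (|z| * |x|) := by
      refine mul_le_mul_of_nonneg_left ?_ ha
      calc z * x ≤ |z * x| := le_abs_self _
        _ = |z| * |x| := abs_mul _ _
    have h2 : a * |z| * |x| ≤ (m + b) * |x| :=
      mul_le_mul_of_nonneg_right hmz (abs_nonneg x)
    have h3 : a * (z * x) ≤ (m + b) * |x| := h1.trans (by rw [← mul_assoc]; exact h2)
    have h4 : (2 * Q) * (a * (z * x)) ≤ (2 * Q) * ((m + b) * |x|) :=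
      mul_le_mul_of_nonneg_left h3 (by positivity)
    have h5 : Q ^ 2 * |x| ^ 2 = Q ^ 2 * x ^ 2 := by rw [sq_abs]
    nlinarith [sq_nonneg (Q * |x| - m), h5, abs_nonneg x, h4]
  refine le_antisymm ?_ (le_ciInf lower)
  set x₀ := if 0 ≤ z then m / Q else -(m / Q) with hx₀
  have h1 : |x₀| = m / Q := by
    rw [hx₀]; split_ifs with h
    · exact abs_of_nonneg (by positivity)
    · rw [abs_neg]; exact abs_of_nonneg (by positivity)
  have h2 : z * x₀ = |z| * (m / Q) := by
    rw [hx₀]; split_ifs with h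
    · rw [abs_of_nonneg h]
    · rw [abs_of_neg (lt_of_not_ge h)]; ring
  have hval : Q / 2 * x₀ ^ 2 - a * z * x₀ + b * |x₀| = -m ^ 2 / (2 * Q) := by
    have hx2 : x₀ ^ 2 = (m / Q) ^ 2 := by rw [← sq_abs, h1]
    rw [hx2, h1, mul_assoc a z x₀, h2]
    field_simp
    linear_combination (-(2:ℝ)) * key
  calc (⨅ x : ℝ, Q / 2 * x ^ 2 - a * z * x + b * |x|)
      ≤ Q / 2 * x₀ ^ 2 - a * z * x₀ + b * |x₀| := by
        refine ciInf_le ⟨-m ^ 2 / (2 * Q), ?_⟩ x₀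
        rintro y ⟨x, rfl⟩
        exact lower x
    _ = -m ^ 2 / (2 * Q) := hval

theorem gaussian_min_value (Qh χh Λ : ℝ) (hQ : 0 < Qh) (hχ : 0 < χh) (hΛ : 0 < Λ) :
    (∫ z : ℝ, (⨅ x : ℝ, Qh / 2 * x ^ 2 - Real.sqrt χh * z * x + Real.sqrt Λ * |x|)
        ∂(gaussianReal 0 1)) =
      -(1 / (2 * Qh)) *
        ((Λ + χh) * erfc (Real.sqrt (Λ / (2 * χh))) -
          Real.sqrt (2 * Λ * χh / Real.pi) * Real.exp (-Λ / (2 * χh))) := by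
  set a := Real.sqrt χh with ha
  set b := Real.sqrt Λ with hb
  have ha0 : 0 < a := Real.sqrt_pos.mpr hχ
  have hb0 : 0 < b := Real.sqrt_pos.mpr hΛ
  set c := b / a with hc
  have hc0 : 0 < c := div_pos hb0 ha0
  have hac : a * c = b := by rw [hc]; field_simp [ha0.ne']
  set E : ℝ → ℝ := fun z => Real.exp (-(1/2 : ℝ) * z ^ 2) with hE
  -- integrability facts
  have h0_int : Integrable E := integrable_exp_neg_mul_sq one_half_pos
  have h1_int : Integrable (fun z => z * E z) := integrable_mul_exp_neg_mul_sq one_half_pos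
  have h2_int : Integrable (fun z => z ^ 2 * E z) := by
    have := integrable_rpow_mul_exp_neg_mul_sq (b := (1/2 : ℝ)) one_half_pos
      (s := 2) (by norm_num)
    simp only [show (2:ℝ) = ((2:ℕ):ℝ) by norm_num, Real.rpow_natCast] at this
    exact this
  have hq_int : Integrable (fun z => (a^2*z^2 - 2*a*b*z - a^2) * E z) := by
    have : (fun z => (a^2*z^2 - 2*a*b*z - a^2) * E z)
        = fun z => a^2 * (z^2 * E z) - (2*a*b) * (z * E z) - a^2 * E z :=
      funext fun z => by ring
    rw [this]
    exact ((h2_int.const_mul _).sub (h1_int.const_mul _)).sub (h0_int.const_mul _)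
  have hg2_int : Integrable (fun z => (a*z - b)^2 * E z) := by
    have : (fun z => (a*z - b)^2 * E z)
        = fun z => a^2 * (z^2 * E z) - (2*a*b) * (z * E z) + b^2 * E z :=
      funext fun z => by ring
    rw [this]
    exact ((h2_int.const_mul _).sub (h1_int.const_mul _)).add (h0_int.const_mul _)
  -- limits at infinity
  have hT2 : Tendsto E atTop (nhds 0) := by
    apply Real.tendsto_exp_atBot.comp
    have h1 : Tendsto (fun z : ℝ => z ^ 2 / 2) atTop atTop :=
      (tendsto_pow_atTop two_ne_zero).atTop_div_const two_pos
    have := tendsto_neg_atTop_atBot.comp h1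
    refine this.congr fun z => ?_
    simp [Function.comp]; ring
  have hT1 : Tendsto (fun z => z * E z) atTop (nhds 0) := by
    apply squeeze_zero' (g := fun z : ℝ => z ^ 1 * Real.exp (-z))
    · filter_upwards [eventually_ge_atTop (0:ℝ)] with z hz
      positivity
    · filter_upwards [eventually_ge_atTop (2:ℝ)] with z hz
      have h1 : -(1/2 : ℝ) * z ^ 2 ≤ -z := by nlinarith
      have := Real.exp_le_exp.mpr h1
      calc z * E z ≤ z * Real.exp (-z) := by
            exact mul_le_mul_of_nonneg_left this (by linarith)
        _ = z ^ 1 * Real.exp (-z) := by ring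
    · exact tendsto_pow_mul_exp_neg_atTop_nhds_zero 1
  have hFt : Tendsto (fun z => -(a^2*z - 2*a*b) * E z) atTop (nhds 0) := by
    have h := (hT1.const_mul (-(a^2))).add (hT2.const_mul (2*a*b))
    simp only [mul_zero, add_zero] at h
    refine h.congr fun z => ?_
    ring
  -- derivative
  have hF : ∀ x : ℝ, HasDerivAt (fun z => -(a^2*z - 2*a*b) * E z)
      ((a^2*x^2 - 2*a*b*x - a^2) * E x) x := by
    intro x
    have hinner : HasDerivAt (fun z : ℝ => -(1/2 : ℝ) * z ^ 2) (-(1/2) * (2 * x ^ 1)) x :=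
      (hasDerivAt_pow 2 x).const_mul (-(1/2 : ℝ))
    have hv : HasDerivAt E (E x * (-(1/2) * (2 * x ^ 1))) x := hinner.exp
    have hu : HasDerivAt (fun z : ℝ => -(a^2*z - 2*a*b)) (-(a^2)) x := by
      exact (((hasDerivAt_id x).const_mul (a^2)).sub_const (2*a*b)).neg.congr_deriv (by ring)
    have := hu.mul hv
    exact this.congr_deriv (by ring)
  -- FTC on (c, ∞)
  have hFTC : ∫ z in Ioi c, (a^2*z^2 - 2*a*b*z - a^2) * E z
      = 0 - (-(a^2*c - 2*a*b) * E c) :=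
    integral_Ioi_of_hasDerivAt_of_tendsto' (fun x _ => hF x) hq_int.integrableOn hFt
  -- substitution to erfc integral
  have hsub : ∫ z in Ioi c, E z
      = Real.sqrt 2 * ∫ t in Ioi (c * (Real.sqrt 2)⁻¹), Real.exp (-t^2) := by
    have h2 : (0:ℝ) < (Real.sqrt 2)⁻¹ := by positivity
    have := integral_comp_mul_right_Ioi (fun t => Real.exp (-t^2)) c h2
    have hfun : (fun z => E z) = fun x : ℝ => Real.exp (-(x * (Real.sqrt 2)⁻¹)^2) := by
      funext x
      simp only [hE]
      congr 1
      have hs : (Real.sqrt 2) ^ 2 = 2 := Real.sq_sqrt (by norm_num)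
      have hne : Real.sqrt 2 ≠ 0 := by positivity
      field_simp
      rw [hs]; ring
    rw [hfun, this, smul_eq_mul, inv_inv]
  -- erfc identity
  have herfc : ∫ t in Ioi (c * (Real.sqrt 2)⁻¹), Real.exp (-t^2)
      = Real.sqrt Real.pi / 2 * erfc (c * (Real.sqrt 2)⁻¹) := by
    have hπ : Real.sqrt Real.pi ≠ 0 := ne_of_gt (Real.sqrt_pos.mpr Real.pi_pos)
    simp only [erfc]
    field_simp
  -- density of the gaussian
  have hdens : ∀ g : ℝ → ℝ, ∫ z, g z ∂(gaussianReal 0 1) = ∫ z, gaussianPDFReal 0 1 z * g z := by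
    intro g
    rw [gaussianReal_of_var_ne_zero 0 one_ne_zero]
    have hmeas : Measurable fun x => Real.toNNReal (gaussianPDFReal 0 1 x) :=
      (measurable_gaussianPDFReal 0 1).real_toNNReal
    rw [show gaussianPDF 0 1 = fun x => ((Real.toNNReal (gaussianPDFReal 0 1 x) : NNReal) : ENNReal) from rfl]
    rw [integral_withDensity_eq_integral_smul hmeas]
    congr 1; funext z
    rw [NNReal.smul_def, smul_eq_mul, Real.coe_toNNReal _ (gaussianPDFReal_nonneg 0 1 z)]
  have hpdf : ∀ z : ℝ, gaussianPDFReal 0 1 z = (Real.sqrt (2*Real.pi))⁻¹ * E z := by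
    intro z
    simp only [gaussianPDFReal, hE]
    norm_num
    ring_nf
    tauto
  -- the inner infimum
  have hinf : ∀ z : ℝ, (⨅ x : ℝ, Qh / 2 * x ^ 2 - a * z * x + b * |x|)
      = -(max (a * |z| - b) 0) ^ 2 / (2 * Qh) :=
    fun z => infi_quad Qh a b z hQ ha0.le hb0.le
  -- f₁ : the even profile
  set K : ℝ := -(Real.sqrt (2*Real.pi))⁻¹ / (2 * Qh) with hK
  set f₁ : ℝ → ℝ := fun t => max (a*t - b) 0 ^ 2 * E t with hf₁
  have hstep1 : (∫ z : ℝ, (⨅ x : ℝ, Qh / 2 * x ^ 2 - a * z * x + b * |x|)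
      ∂(gaussianReal 0 1)) = K * ∫ z : ℝ, f₁ |z| := by
    rw [hdens]
    rw [← integral_const_mul _ _]
    congr 1; funext z
    rw [hinf z, hpdf z]
    have hez : E |z| = E z := by simp [hE, sq_abs]
    simp only [hf₁, hez, hK]
    ring
  have habs : ∫ z : ℝ, f₁ |z| = 2 * ∫ t in Ioi (0:ℝ), f₁ t := integral_comp_abs
  -- split the half-line integral
  have hcont : Continuous f₁ := by
    apply Continuous.mul
    · exact (((continuous_const.mul continuous_id).sub continuous_const).max continuous_const).pow 2
    · exact Real.continuous_exp.comp (continuous_const.mul (continuous_pow 2))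
  have hInt2 : IntegrableOn f₁ (Ioi c) := by
    refine (hg2_int.integrableOn).congr_fun (fun z hz => ?_) measurableSet_Ioi
    have hzc : 0 ≤ a * z - b := by
      have := mul_le_mul_of_nonneg_left (le_of_lt hz) ha0.le
      rw [hac] at this; linarith
    simp [hf₁, max_eq_left hzc]
  have hInt1 : IntegrableOn f₁ (Ioc 0 c) := hcont.integrableOn_Ioc
  have hsplit : ∫ t in Ioi (0:ℝ), f₁ t = (∫ t in Ioc 0 c, f₁ t) + ∫ t in Ioi c, f₁ t := by
    rw [← setIntegral_union (Set.Ioc_disjoint_Ioi le_rfl) measurableSet_Ioi hInt1 hInt2,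
      Set.Ioc_union_Ioi_eq_Ioi hc0.le]
  have hzero : ∫ t in Ioc (0:ℝ) c, f₁ t = 0 := by
    have h : EqOn f₁ (fun _ => (0:ℝ)) (Ioc 0 c) := by
      intro z hz
      have hzc : a * z - b ≤ 0 := by
        have := mul_le_mul_of_nonneg_left hz.2 ha0.le
        rw [hac] at this; linarith
      simp [hf₁, max_eq_right hzc]
    rw [setIntegral_congr_fun measurableSet_Ioc h, integral_zero]
  have hIoiEq : ∫ t in Ioi c, f₁ t = ∫ t in Ioi c, (a*t - b)^2 * E t := by
    refine setIntegral_congr_fun measurableSet_Ioi fun z hz => ?_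
    have hzc : 0 ≤ a * z - b := by
      have := mul_le_mul_of_nonneg_left (le_of_lt hz) ha0.le
      rw [hac] at this; linarith
    simp [hf₁, max_eq_left hzc]
  have hval : ∫ t in Ioi c, (a*t - b)^2 * E t
      = (0 - (-(a^2*c - 2*a*b) * E c)) + (a^2 + b^2) * ∫ z in Ioi c, E z := by
    have hfe : (fun t => (a*t - b)^2 * E t)
        = fun t => (a^2*t^2 - 2*a*b*t - a^2) * E t + (a^2 + b^2) * E t :=
      funext fun t => by ring
    rw [hfe, integral_add hq_int.integrableOn ((h0_int.const_mul _).integrableOn),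
      hFTC, integral_const_mul]
  -- algebraic facts
  have ha2 : a^2 = χh := Real.sq_sqrt hχ.le
  have hb2 : b^2 = Λ := Real.sq_sqrt hΛ.le
  have hX : c * (Real.sqrt 2)⁻¹ = Real.sqrt (Λ / (2*χh)) := by
    rw [Real.sqrt_div hΛ.le, Real.sqrt_mul (by norm_num : (0:ℝ) ≤ 2) χh, hc, ← hb, ← ha]
    have h2 : Real.sqrt 2 ≠ 0 := by positivity
    field_simp
  have hEc : E c = Real.exp (-Λ / (2*χh)) := by
    have hc2 : c ^ 2 = Λ / χh := by rw [hc, div_pow, hb2, ha2]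
    simp only [hE]
    rw [hc2]
    congr 1
    field_simp
  have hW : Real.sqrt (2*Λ*χh/Real.pi) * Real.sqrt (2*Real.pi) = 2*(a*b) := by
    rw [← Real.sqrt_mul (by positivity : (0:ℝ) ≤ 2*Λ*χh/Real.pi) (2*Real.pi)]
    have harg : 2*Λ*χh/Real.pi * (2*Real.pi) = 4*(Λ*χh) := by
      field_simp
      ring
    rw [harg, Real.sqrt_mul (by norm_num : (0:ℝ) ≤ 4) (Λ*χh),
      Real.sqrt_mul hΛ.le χh, show Real.sqrt 4 = 2 by
        rw [show (4:ℝ) = 2^2 by norm_num, Real.sqrt_sq (by norm_num : (0:ℝ) ≤ 2)],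
      ← hb, ← ha]
    ring
  -- final assembly
  have h2π : Real.sqrt 2 * Real.sqrt Real.pi = Real.sqrt (2*Real.pi) :=
    (Real.sqrt_mul (by norm_num : (0:ℝ) ≤ 2) Real.pi).symm
  have hW' : Real.sqrt (2*Λ*χh/Real.pi) * (Real.sqrt 2 * Real.sqrt Real.pi) = 2*(a*b) := by
    rw [h2π]; exact hW
  have hA2C : a^2*c = a*b := by rw [hc]; field_simp
  rw [hstep1, habs, hsplit, hzero, hIoiEq, hval, hsub, herfc, hX, hEc, hK, hA2C, ← h2π, ha2, hb2]
  have hs2 : Real.sqrt 2 ≠ 0 := by positivity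
  have hsπ : Real.sqrt Real.pi ≠ 0 := ne_of_gt (Real.sqrt_pos.mpr Real.pi_pos)
  rw [ha, hb] at hA2C ⊢
  field_simp
  have h22 : Real.sqrt 2 * Real.sqrt 2 = 2 := Real.mul_self_sqrt (by norm_num)
  rw [ha, hb] at hW'
  linear_combination (-Real.exp (-(Λ/(2*χh)))) * hW'
end

section
/- For Q̂ > 0, χ̂ > 0, Λ > 0, with g(z) = sign(z)·max(sqrt(χ̂)|z| − sqrt(Λ), 0)/Q̂ and z standard Gaussian: E[g(z)²] = (1/Q̂²)[ (Λ + χ̂) erfc( sqrt(Λ/(2χ̂)) ) − sqrt(2Λχ̂/π) exp(−Λ/(2χ̂)) ]. -/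
open MeasureTheory ProbabilityTheory Real Set Filter
open scoped NNReal ENNReal


lemma ig : Integrable (fun z : ℝ => Real.exp (-z^2/2)) := by
  have := integrable_exp_neg_mul_sq (b := (1/2 : ℝ)) (by norm_num)
  refine this.congr (Eventually.of_forall fun z => ?_)
  ring_nf

lemma izg : Integrable (fun z : ℝ => z * Real.exp (-z^2/2)) := by
  have := integrable_mul_exp_neg_mul_sq (b := (1/2 : ℝ)) (by norm_num)
  refine this.congr (Eventually.of_forall fun z => ?_)
  ring_nf

lemma iz2g : Integrable (fun z : ℝ => z^2 * Real.exp (-z^2/2)) := by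
  have := integrable_rpow_mul_exp_neg_mul_sq (b := (1/2 : ℝ)) (by norm_num) (s := 2) (by norm_num)
  refine this.congr (Eventually.of_forall fun z => ?_)
  simp only [Real.rpow_natCast, Real.rpow_two]
  ring_nf

lemma tend0 : Tendsto (fun x : ℝ => Real.exp (-x^2/2)) atTop (nhds 0) := by
  have h := rpow_mul_exp_neg_mul_sq_isLittleO_exp_neg (b := (1/2:ℝ)) (by norm_num) 0
  have hg : Tendsto (fun x : ℝ => Real.exp (-(1/2) * x)) atTop (nhds 0) := by
    have : Tendsto (fun x : ℝ => -(1/2) * x) atTop atBot :=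
      Tendsto.const_mul_atTop_of_neg (by norm_num) tendsto_id
    exact Real.tendsto_exp_atBot.comp this
  have := h.tendsto_zero_of_tendsto hg
  refine this.congr fun x => ?_
  rw [Real.rpow_zero]; ring_nf

lemma tend1 : Tendsto (fun x : ℝ => x * Real.exp (-x^2/2)) atTop (nhds 0) := by
  have h := rpow_mul_exp_neg_mul_sq_isLittleO_exp_neg (b := (1/2:ℝ)) (by norm_num) 1
  have hg : Tendsto (fun x : ℝ => Real.exp (-(1/2) * x)) atTop (nhds 0) := by
    have : Tendsto (fun x : ℝ => -(1/2) * x) atTop atBot :=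
      Tendsto.const_mul_atTop_of_neg (by norm_num) tendsto_id
    exact Real.tendsto_exp_atBot.comp this
  have := h.tendsto_zero_of_tendsto hg
  refine this.congr fun x => ?_
  rw [Real.rpow_one]; ring_nf

lemma L2 (a : ℝ) : ∫ z in Ioi a, z * Real.exp (-z^2/2) = Real.exp (-a^2/2) := by
  have hder : ∀ x : ℝ, HasDerivAt (fun z : ℝ => -Real.exp (-z^2/2)) (x * Real.exp (-x^2/2)) x := by
    intro x
    have h1 : HasDerivAt (fun z : ℝ => -z^2/2) (-x) x := by
      have := ((hasDerivAt_pow 2 x).neg).div_const 2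
      exact this.congr_deriv (by ring)
    have := (h1.exp).neg
    exact this.congr_deriv (by ring)
  have := integral_Ioi_of_hasDerivAt_of_tendsto' (a := a) (fun x _ => hder x)
    (izg.integrableOn) (tend0.neg)
  rw [this]; ring_nf

lemma L1 (a : ℝ) : ∫ z in Ioi a, (z^2 - 1) * Real.exp (-z^2/2) = a * Real.exp (-a^2/2) := by
  have hder : ∀ x : ℝ, HasDerivAt (fun z : ℝ => -(z * Real.exp (-z^2/2)))
      ((x^2 - 1) * Real.exp (-x^2/2)) x := by
    intro x
    have h1 : HasDerivAt (fun z : ℝ => -z^2/2) (-x) x := by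
      have := ((hasDerivAt_pow 2 x).neg).div_const 2
      exact this.congr_deriv (by ring)
    have := ((hasDerivAt_id x).mul h1.exp).neg
    simp only [id_eq] at this
    exact this.congr_deriv (by ring)
  have hint : IntegrableOn (fun z : ℝ => (z^2 - 1) * Real.exp (-z^2/2)) (Ioi a) := by
    refine ((iz2g.sub ig).congr (Eventually.of_forall fun z => ?_)).integrableOn
    simp only [Pi.sub_apply]; ring
  have := integral_Ioi_of_hasDerivAt_of_tendsto' (a := a) (fun x _ => hder x) hint (tend1.neg)
  rw [this]; ring_nf

lemma L3 (a : ℝ) : ∫ z in Ioi a, Real.exp (-z^2/2)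
    = Real.sqrt 2 * ∫ t in Ioi (a * (Real.sqrt 2)⁻¹), Real.exp (-t^2) := by
  have h2 : (0:ℝ) < (Real.sqrt 2)⁻¹ := by positivity
  have := integral_comp_mul_right_Ioi (fun t => Real.exp (-t^2)) a h2
  simp only [smul_eq_mul, inv_inv] at this
  rw [← this]
  refine setIntegral_congr_fun measurableSet_Ioi fun x _ => ?_
  congr 1
  rw [mul_pow, inv_pow, Real.sq_sqrt (by norm_num : (0:ℝ) ≤ 2)]
  ring


theorem gaussian_soft_threshold_second_moment (Qh χh Λ : ℝ)
    (hQ : 0 < Qh) (hχ : 0 < χh) (hΛ : 0 < Λ) :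
    (∫ z : ℝ,
        (Real.sign z * max (Real.sqrt χh * |z| - Real.sqrt Λ) 0 / Qh) ^ 2
        ∂(gaussianReal 0 1)) =
      (1 / Qh ^ 2) *
        ((Λ + χh) * erfc (Real.sqrt (Λ / (2 * χh))) -
          Real.sqrt (2 * Λ * χh / Real.pi) * Real.exp (-Λ / (2 * χh))) := by
  have hπ : (0:ℝ) < Real.pi := Real.pi_pos
  set a := Real.sqrt (Λ / χh) with ha_def
  have ha : 0 < a := Real.sqrt_pos.mpr (by positivity)
  have ha2 : a ^ 2 = Λ / χh := Real.sq_sqrt (by positivity)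
  -- Step 1: unfold the gaussian measure
  rw [gaussianReal_of_var_ne_zero 0 one_ne_zero]
  have hpdf : gaussianPDF 0 1 = fun x => (((gaussianPDFReal 0 1 x).toNNReal : ℝ≥0) : ℝ≥0∞) := by
    funext x; rfl
  rw [hpdf, integral_withDensity_eq_integral_smul
    ((measurable_gaussianPDFReal 0 1).real_toNNReal)]
  -- Step 2: pointwise rewrite of the integrand
  have key : ∀ z : ℝ, (gaussianPDFReal 0 1 z).toNNReal •
      ((Real.sign z * max (Real.sqrt χh * |z| - Real.sqrt Λ) 0 / Qh) ^ 2)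
      = (χh / (Real.sqrt (2 * Real.pi) * Qh ^ 2)) *
        ((fun t => max (t - a) 0 ^ 2 * Real.exp (-t ^ 2 / 2)) |z|) := by
    intro z
    have hpdfz : gaussianPDFReal 0 1 z = (Real.sqrt (2 * Real.pi))⁻¹ * Real.exp (-z ^ 2 / 2) := by
      simp [gaussianPDFReal]
    rw [NNReal.smul_def, Real.coe_toNNReal _ (gaussianPDFReal_nonneg 0 1 z), smul_eq_mul, hpdfz]
    have hM : max (Real.sqrt χh * |z| - Real.sqrt Λ) 0 = Real.sqrt χh * max (|z| - a) 0 := by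
      rw [mul_max_of_nonneg _ _ (Real.sqrt_nonneg χh), mul_zero, mul_sub]
      congr 2
      rw [ha_def, ← Real.sqrt_mul hχ.le, mul_div_cancel₀ _ hχ.ne']
    rw [hM]
    have habs : |z| ^ 2 = z ^ 2 := sq_abs z
    rcases eq_or_ne z 0 with rfl | hz
    · simp [ha.le]
    · have hs : Real.sign z ^ 2 = 1 := by
        rcases Real.sign_apply_eq_of_ne_zero z hz with h | h <;> rw [h] <;> norm_num
      have hχ2 : Real.sqrt χh ^ 2 = χh := Real.sq_sqrt hχ.le
      simp only []
      rw [div_pow, mul_pow, mul_pow, hs, hχ2, habs]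
      field_simp
  simp_rw [key]
  rw [MeasureTheory.integral_const_mul, integral_comp_abs (f := fun t => max (t - a) 0 ^ 2 * Real.exp (-t ^ 2 / 2))]
  -- Step 3: restrict to Ioi a
  have hind : ∀ x : ℝ, max (x - a) 0 ^ 2 * Real.exp (-x ^ 2 / 2)
      = Set.indicator (Ioi a) (fun t => (t - a) ^ 2 * Real.exp (-t ^ 2 / 2)) x := by
    intro x
    rcases le_or_gt x a with h | h
    · rw [Set.indicator_of_notMem (by simpa using h), max_eq_right (by linarith)]
      simp
    · rw [Set.indicator_of_mem (by simpa using h), max_eq_left (by linarith)]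
  simp_rw [hind]
  rw [MeasureTheory.integral_indicator measurableSet_Ioi,
    Measure.restrict_restrict measurableSet_Ioi,
    show Ioi a ∩ Ioi (0:ℝ) = Ioi a from by rw [Set.Ioi_inter_Ioi, max_eq_left ha.le]]
  -- Step 4: compute the integral over Ioi a
  have hsplit : ∀ z : ℝ, (z - a) ^ 2 * Real.exp (-z ^ 2 / 2)
      = ((z ^ 2 - 1) * Real.exp (-z ^ 2 / 2) + (1 + a ^ 2) * Real.exp (-z ^ 2 / 2))
        - (2 * a) * (z * Real.exp (-z ^ 2 / 2)) := fun z => by ring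
  have hint1 : IntegrableOn (fun z : ℝ => (z ^ 2 - 1) * Real.exp (-z ^ 2 / 2)) (Ioi a) := by
    refine ((iz2g.sub ig).congr (Eventually.of_forall fun z => ?_)).integrableOn
    simp only [Pi.sub_apply]; ring
  have hint2 : IntegrableOn (fun z : ℝ => (1 + a ^ 2) * Real.exp (-z ^ 2 / 2)) (Ioi a) :=
    (ig.const_mul _).integrableOn
  have hint3 : IntegrableOn (fun z : ℝ => (2 * a) * (z * Real.exp (-z ^ 2 / 2))) (Ioi a) :=
    (izg.const_mul _).integrableOn
  simp_rw [hsplit]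
  have hsub := MeasureTheory.integral_sub (μ := volume.restrict (Ioi a)) (hint1.add hint2) hint3
  simp only [Pi.add_apply] at hsub
  rw [hsub, MeasureTheory.integral_add hint1 hint2,
    MeasureTheory.integral_const_mul, MeasureTheory.integral_const_mul,
    L1 a, L2 a, L3 a]
  -- Step 5: identify the erfc term and the exponential term
  have hx0 : a * (Real.sqrt 2)⁻¹ = Real.sqrt (Λ / (2 * χh)) := by
    rw [ha_def, ← Real.sqrt_inv, ← Real.sqrt_mul (by positivity),
      show Λ / χh * 2⁻¹ = Λ / (2 * χh) from by rw [mul_comm 2 χh, ← div_div, ← div_eq_mul_inv]]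
  have herfc : ∫ t in Ioi (a * (Real.sqrt 2)⁻¹), Real.exp (-t ^ 2)
      = Real.sqrt Real.pi / 2 * erfc (Real.sqrt (Λ / (2 * χh))) := by
    rw [← hx0, erfc]
    have : Real.sqrt Real.pi ≠ 0 := by positivity
    field_simp
  have hexp : Real.exp (-a ^ 2 / 2) = Real.exp (-Λ / (2 * χh)) := by
    rw [ha2, ← neg_div, div_div, mul_comm χh 2]
  rw [herfc, hexp]
  -- Step 6: final algebra
  have h2π : Real.sqrt (2 * Real.pi) = Real.sqrt 2 * Real.sqrt Real.pi :=
    Real.sqrt_mul (by norm_num) _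
  have hs2 : Real.sqrt 2 ^ 2 = 2 := Real.sq_sqrt (by norm_num)
  have hsπ : Real.sqrt Real.pi ^ 2 = Real.pi := Real.sq_sqrt hπ.le
  have hc2 : Real.sqrt (2 * Λ * χh / Real.pi)
      = 2 * χh * a / Real.sqrt (2 * Real.pi) := by
    rw [show 2 * Λ * χh / Real.pi = (2 * χh * a / Real.sqrt (2 * Real.pi)) ^ 2 from ?_,
      Real.sqrt_sq (by positivity)]
    rw [div_pow, mul_pow, mul_pow, ha2, Real.sq_sqrt (by positivity : (0:ℝ) ≤ 2 * Real.pi)]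
    field_simp
  rw [hc2]
  have hA : χh * (1 + a ^ 2) = χh + Λ := by
    rw [ha2]; field_simp
  have hs2π : Real.sqrt 2 * Real.sqrt Real.pi ≠ 0 := by positivity
  rw [h2π]
  field_simp
  linear_combination (Real.sqrt 2 * Real.sqrt Real.pi *
    erfc (Real.sqrt (Λ / (χh * 2)))) * hA
end
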